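/- Let f : P¹ → P¹ be a rational map of degree d > 1, k ≥ 1 an integer, λ ∈ ℂ nonzero, and q a nonzero meromorphic k-differential on P¹ with f*q = λ·q. If x ∈ P¹ is a pole of q of order m := −ord_x(q) with m < k, then for every y ∈ f⁻¹(x) the local degree satisfies deg_y(f) ≤ k/(k − m). -/

import Mathlib

open Polynomial OnePoint

noncomputable section

/-- The Riemann sphere `P¹ = ℂ ∪ {∞}`. -/
abbrev P1 := OnePoint ℂ

namespace ParallelTensor

/-- Order of vanishing (negative at poles) of a nonzero rational function at a finite point. -/
def ordC (g : RatFunc ℂ) (x : ℂ) : ℤ :=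
  (g.num.rootMultiplicity x : ℤ) - (g.denom.rootMultiplicity x : ℤ)

/-- Composition `g ∘ f` of rational functions. -/
def comp (g f : RatFunc ℂ) : RatFunc ℂ :=
  Polynomial.aeval f g.num / Polynomial.aeval f g.denom

/-- Derivative of a rational function. -/
def deriv (f : RatFunc ℂ) : RatFunc ℂ :=
  algebraMap (Polynomial ℂ) (RatFunc ℂ)
      (Polynomial.derivative f.num * f.denom - f.num * Polynomial.derivative f.denom) /
    algebraMap (Polynomial ℂ) (RatFunc ℂ) (f.denom ^ 2)

/-- The (global) degree of a rational map. -/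
def degRat (f : RatFunc ℂ) : ℕ := max f.num.natDegree f.denom.natDegree

/-- Evaluation of a rational map as a self-map of the Riemann sphere. -/
def evalP1 (f : RatFunc ℂ) : P1 → P1 := fun x =>
  Option.elim x
    (if 0 < f.intDegree then (∞ : P1)
     else if f.intDegree < 0 then ((0 : ℂ) : P1)
     else ((f.num.leadingCoeff / f.denom.leadingCoeff : ℂ) : P1))
    (fun z => if f.denom.eval z = 0 then (∞ : P1)
              else ((f.num.eval z / f.denom.eval z : ℂ) : P1))

/-- Local degree of `f` at a finite point: the pole order at a pole, and the order of
vanishing of `f - f(z)` otherwise. -/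
def locDegC (f : RatFunc ℂ) (z : ℂ) : ℕ :=
  if f.denom.eval z = 0 then f.denom.rootMultiplicity z
  else (ordC (f - RatFunc.C (f.num.eval z / f.denom.eval z)) z).toNat

/-- Local degree (valency) of `f` at a point of the sphere; at `∞` it is computed in the
coordinate `w = 1/z`. -/
def locDeg (f : RatFunc ℂ) : P1 → ℕ := fun x =>
  Option.elim x (locDegC (comp f (RatFunc.X)⁻¹) 0) (locDegC f)

/-- Order of the meromorphic `k`-differential `q = g·dz^k` at a point of the sphere:
`ord_x(g)` at a finite point `x`, and at `∞` the order at `0` of `g(1/w)·(-w⁻²)^k`. -/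
def ordDiff (k : ℕ) (g : RatFunc ℂ) : P1 → ℤ := fun x =>
  Option.elim x (-g.intDegree - 2 * k) (ordC g)

/-- Pullback of the `k`-differential `q = g·dz^k` under `f`, namely `g(f(z))·f'(z)^k·dz^k`. -/
def pullback (k : ℕ) (f g : RatFunc ℂ) : RatFunc ℂ := comp g f * deriv f ^ k

abbrev A : ℂ[X] →+* RatFunc ℂ := algebraMap ℂ[X] (RatFunc ℂ)

lemma A_ne_zero {p : ℂ[X]} (hp : p ≠ 0) : A p ≠ 0 :=
  RatFunc.algebraMap_ne_zero hp

lemma coprime_not_both_root {p q : ℂ[X]} (h : IsCoprime p q) (y : ℂ) :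
    ¬(p.eval y = 0 ∧ q.eval y = 0) := by
  rintro ⟨hp, hq⟩
  obtain ⟨a, b, hab⟩ := h
  have := congrArg (Polynomial.eval y) hab
  simp [hp, hq] at this

lemma C_ne_zero' {c : ℂ} (hc : c ≠ 0) : (RatFunc.C c : RatFunc ℂ) ≠ 0 := by
  intro h
  have h2 : (RatFunc.C c : RatFunc ℂ) = A (Polynomial.C c) := (RatFunc.algebraMap_C c).symm
  rw [h2] at h
  exact hc (by simpa using (RatFunc.algebraMap_injective ℂ) (h.trans (map_zero A).symm))

/-- Fundamental: order from an arbitrary representation. -/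
lemma ordC_eq_of_rep {g : RatFunc ℂ} {p q : ℂ[X]} (hg : g ≠ 0) (hq : q ≠ 0)
    (hrep : g = A p / A q) (x : ℂ) :
    ordC g x = (p.rootMultiplicity x : ℤ) - (q.rootMultiplicity x : ℤ) := by
  have hp : p ≠ 0 := by
    rintro rfl
    simp at hrep
    exact hg hrep
  have hcross : g.num * q = p * g.denom := (RatFunc.num_mul_eq_mul_denom_iff hq).mpr hrep
  have h1 : (g.num * q).rootMultiplicity x = (p * g.denom).rootMultiplicity x := by rw [hcross]
  rw [Polynomial.rootMultiplicity_mul (mul_ne_zero (RatFunc.num_ne_zero hg) hq),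
    Polynomial.rootMultiplicity_mul (mul_ne_zero hp (RatFunc.denom_ne_zero g))] at h1
  unfold ordC
  omega

lemma ordC_mul {a b : RatFunc ℂ} (ha : a ≠ 0) (hb : b ≠ 0) (x : ℂ) :
    ordC (a * b) x = ordC a x + ordC b x := by
  have hrep : a * b = A (a.num * b.num) / A (a.denom * b.denom) := by
    rw [map_mul, map_mul, ← div_mul_div_comm, RatFunc.num_div_denom, RatFunc.num_div_denom]
  rw [ordC_eq_of_rep (mul_ne_zero ha hb)
      (mul_ne_zero (RatFunc.denom_ne_zero a) (RatFunc.denom_ne_zero b)) hrep x,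
    Polynomial.rootMultiplicity_mul (mul_ne_zero (RatFunc.num_ne_zero ha) (RatFunc.num_ne_zero hb)),
    Polynomial.rootMultiplicity_mul (mul_ne_zero (RatFunc.denom_ne_zero a) (RatFunc.denom_ne_zero b))]
  unfold ordC
  push_cast
  ring

lemma ordC_algebraMap {p : ℂ[X]} (hp : p ≠ 0) (x : ℂ) :
    ordC (A p) x = (p.rootMultiplicity x : ℤ) := by
  have : (A p : RatFunc ℂ) = A p / A 1 := by simp
  rw [ordC_eq_of_rep (A_ne_zero hp) one_ne_zero this x]
  simp

lemma ordC_one (x : ℂ) : ordC 1 x = 0 := by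
  have := ordC_algebraMap (p := 1) one_ne_zero x
  rw [Polynomial.rootMultiplicity_eq_zero (by simp [Polynomial.IsRoot])] at this
  simpa using this

lemma ordC_C {c : ℂ} (hc : c ≠ 0) (x : ℂ) : ordC (RatFunc.C c) x = 0 := by
  have h : (RatFunc.C c : RatFunc ℂ) = A (Polynomial.C c) := by
    simp [RatFunc.algebraMap_C]
  rw [h, ordC_algebraMap (by simpa using hc)]
  simp [Polynomial.rootMultiplicity_C]

lemma ordC_inv {a : RatFunc ℂ} (ha : a ≠ 0) (x : ℂ) : ordC a⁻¹ x = -ordC a x := by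
  have h := ordC_mul (a := a) (b := a⁻¹) ha (inv_ne_zero ha) x
  rw [mul_inv_cancel₀ ha, ordC_one] at h
  omega

lemma ordC_pow {a : RatFunc ℂ} (ha : a ≠ 0) (n : ℕ) (x : ℂ) :
    ordC (a ^ n) x = n * ordC a x := by
  induction n with
  | zero => simpa using ordC_one x
  | succ n ih =>
    rw [pow_succ, ordC_mul (pow_ne_zero n ha) ha, ih]
    push_cast; ring

lemma ordC_zpow {a : RatFunc ℂ} (ha : a ≠ 0) (n : ℤ) (x : ℂ) :
    ordC (a ^ n) x = n * ordC a x := by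
  cases n with
  | ofNat m => simpa using ordC_pow ha m x
  | negSucc m =>
    rw [zpow_negSucc, ordC_inv (pow_ne_zero _ ha), ordC_pow ha]
    simp [Int.negSucc_eq]; ring

lemma ordC_neg {a : RatFunc ℂ} (ha : a ≠ 0) (x : ℂ) : ordC (-a) x = ordC a x := by
  have h : -a = RatFunc.C (-1) * a := by
    rw [map_neg, map_one]; ring
  rw [h, ordC_mul (by simp : (RatFunc.C (-1) : RatFunc ℂ) ≠ 0) ha, ordC_C (by norm_num)]
  ring

lemma ordC_add_ge {a b : RatFunc ℂ} (ha : a ≠ 0) (hb : b ≠ 0) (hab : a + b ≠ 0) (x : ℂ) :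
    min (ordC a x) (ordC b x) ≤ ordC (a + b) x := by
  have hrep : a + b = A (a.num * b.denom + a.denom * b.num) / A (a.denom * b.denom) := by
    rw [map_add, map_mul, map_mul, map_mul,
      ← div_add_div _ _ (A_ne_zero (RatFunc.denom_ne_zero a)) (A_ne_zero (RatFunc.denom_ne_zero b)),
      RatFunc.num_div_denom, RatFunc.num_div_denom]
  have hnum : a.num * b.denom + a.denom * b.num ≠ 0 := by
    intro h0
    rw [h0] at hrep
    simp at hrep
    exact hab hrep
  rw [ordC_eq_of_rep hab (mul_ne_zero (RatFunc.denom_ne_zero a) (RatFunc.denom_ne_zero b)) hrep x,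
    Polynomial.rootMultiplicity_mul (mul_ne_zero (RatFunc.denom_ne_zero a) (RatFunc.denom_ne_zero b))]
  have h1 := Polynomial.rootMultiplicity_add x hnum (p := a.num * b.denom) (q := a.denom * b.num)
  rw [Polynomial.rootMultiplicity_mul (mul_ne_zero (RatFunc.num_ne_zero ha) (RatFunc.denom_ne_zero b)),
    Polynomial.rootMultiplicity_mul (mul_ne_zero (RatFunc.denom_ne_zero a) (RatFunc.num_ne_zero hb))] at h1
  unfold ordC
  omega

lemma ordC_add_eq_left {a b : RatFunc ℂ} (ha : a ≠ 0) (hb : b ≠ 0) (x : ℂ)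
    (hlt : ordC a x < ordC b x) : ordC (a + b) x = ordC a x := by
  have hab : a + b ≠ 0 := by
    intro h0
    have : b = -a := by linear_combination h0
    rw [this, ordC_neg ha] at hlt
    omega
  have h1 := ordC_add_ge ha hb hab x
  rcases lt_or_ge (ordC a x) (ordC (a+b) x) with h2 | h2
  · exfalso
    have h3 : a = (a + b) + (-b) := by ring
    have h4 := ordC_add_ge hab (neg_ne_zero.mpr hb) (by rw [← h3]; exact ha) x
    rw [← h3, ordC_neg hb] at h4
    omega
  · omega

lemma num_root_iff {g : RatFunc ℂ} (hg : g ≠ 0) (x : ℂ) :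
    g.num.eval x = 0 ↔ 0 < ordC g x := by
  have hcop := RatFunc.isCoprime_num_denom g
  have hnum := RatFunc.num_ne_zero hg
  have hden := RatFunc.denom_ne_zero g
  constructor
  · intro h
    have h1 : 0 < g.num.rootMultiplicity x := (Polynomial.rootMultiplicity_pos hnum).mpr h
    have h2 : g.denom.eval x ≠ 0 := fun h' => coprime_not_both_root hcop x ⟨h, h'⟩
    have h3 : g.denom.rootMultiplicity x = 0 := Polynomial.rootMultiplicity_eq_zero h2
    unfold ordC
    omega
  · intro h
    by_contra hne
    have h3 : g.num.rootMultiplicity x = 0 := Polynomial.rootMultiplicity_eq_zero hne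
    unfold ordC at h
    omega

lemma denom_root_iff (g : RatFunc ℂ) (x : ℂ) :
    g.denom.eval x = 0 ↔ ordC g x < 0 := by
  by_cases hg : g = 0
  · subst hg
    simp [ordC]
  have hcop := RatFunc.isCoprime_num_denom g
  have hnum := RatFunc.num_ne_zero hg
  constructor
  · intro h
    have h1 : 0 < g.denom.rootMultiplicity x :=
      (Polynomial.rootMultiplicity_pos (RatFunc.denom_ne_zero g)).mpr h
    have h2 : g.num.eval x ≠ 0 := fun h' => coprime_not_both_root hcop x ⟨h', h⟩
    have h3 : g.num.rootMultiplicity x = 0 := Polynomial.rootMultiplicity_eq_zero h2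
    unfold ordC
    omega
  · intro h
    by_contra hne
    have h3 : g.denom.rootMultiplicity x = 0 := Polynomial.rootMultiplicity_eq_zero hne
    unfold ordC at h
    omega

/-- From a representation `g = p/q`, extract the common factor. -/
lemma rep_factor {g : RatFunc ℂ} {p q : ℂ[X]} (hq : q ≠ 0) (hrep : g = A p / A q) :
    ∃ s : ℂ[X], s ≠ 0 ∧ p = g.num * s ∧ q = g.denom * s := by
  have hcross : g.num * q = p * g.denom := (RatFunc.num_mul_eq_mul_denom_iff hq).mpr hrep
  have hdvd : g.denom ∣ q := by
    have : g.denom ∣ g.num * q := Dvd.intro_left p hcross.symm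
    exact ((RatFunc.isCoprime_num_denom g).symm.dvd_of_dvd_mul_left this)
  obtain ⟨s, hs⟩ := hdvd
  refine ⟨s, ?_, ?_, hs⟩
  · rintro rfl; rw [mul_zero] at hs; exact hq hs
  · have h2 : g.num * (g.denom * s) = p * g.denom := by rw [← hs]; exact hcross
    have h3 : g.denom * (g.num * s) = g.denom * p := by ring_nf; ring_nf at h2; linear_combination h2
    exact (mul_left_cancel₀ (RatFunc.denom_ne_zero g) h3).symm ▸ rfl

lemma denom_eval_ne_zero_of_rep {g : RatFunc ℂ} {p q : ℂ[X]} {y : ℂ}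
    (hqy : q.eval y ≠ 0) (hrep : g = A p / A q) :
    g.denom.eval y ≠ 0 ∧ g.num.eval y * q.eval y = p.eval y * g.denom.eval y := by
  have hq : q ≠ 0 := fun h => hqy (by rw [h]; simp)
  obtain ⟨s, hs0, hp, hqeq⟩ := rep_factor hq hrep
  have hsy : s.eval y ≠ 0 ∧ g.denom.eval y ≠ 0 := by
    have := congrArg (Polynomial.eval y) hqeq
    rw [Polynomial.eval_mul] at this
    constructor <;> (intro h; apply hqy; rw [this]; simp [h])
  refine ⟨hsy.2, ?_⟩
  have := congrArg (Polynomial.eval y) hp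
  rw [Polynomial.eval_mul] at this
  have h2 := congrArg (Polynomial.eval y) hqeq
  rw [Polynomial.eval_mul] at h2
  rw [this, h2]; ring

lemma ordC_nonneg_of_rep {g : RatFunc ℂ} {p q : ℂ[X]} {y : ℂ}
    (hqy : q.eval y ≠ 0) (hrep : g = A p / A q) : 0 ≤ ordC g y := by
  have h := (denom_eval_ne_zero_of_rep hqy hrep).1
  have := (denom_root_iff g y).not.mp (by simpa using h)
  omega

lemma ordC_pos_iff_rep {g : RatFunc ℂ} {p q : ℂ[X]} {y : ℂ} (hg : g ≠ 0)
    (hqy : q.eval y ≠ 0) (hrep : g = A p / A q) : 0 < ordC g y ↔ p.eval y = 0 := by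
  obtain ⟨hden, hcross⟩ := denom_eval_ne_zero_of_rep hqy hrep
  rw [← num_root_iff hg]
  constructor
  · intro h
    have : p.eval y * g.denom.eval y = 0 := by rw [← hcross, h]; ring
    exact (mul_eq_zero.mp this).resolve_right hden
  · intro h
    have : g.num.eval y * q.eval y = 0 := by rw [hcross, h]; ring
    exact (mul_eq_zero.mp this).resolve_right hqy

lemma ordC_eq_zero_of_rep {g : RatFunc ℂ} {p q : ℂ[X]} {y : ℂ}
    (hpy : p.eval y ≠ 0) (hqy : q.eval y ≠ 0) (hrep : g = A p / A q) : ordC g y = 0 := by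
  have hp : p ≠ 0 := fun h => hpy (by rw [h]; simp)
  have hq : q ≠ 0 := fun h => hqy (by rw [h]; simp)
  have hg : g ≠ 0 := by
    rw [hrep]
    exact div_ne_zero (A_ne_zero hp) (A_ne_zero hq)
  rw [ordC_eq_of_rep hg hq hrep, Polynomial.rootMultiplicity_eq_zero hpy,
    Polynomial.rootMultiplicity_eq_zero hqy]
  simp

lemma value_of_rep {g : RatFunc ℂ} {p q : ℂ[X]} {y : ℂ}
    (hqy : q.eval y ≠ 0) (hrep : g = A p / A q) :
    g.num.eval y / g.denom.eval y = p.eval y / q.eval y := by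
  obtain ⟨hden, hcross⟩ := denom_eval_ne_zero_of_rep hqy hrep
  field_simp
  linear_combination hcross

/-! ### Composition as a ring homomorphism -/

/-- `f` is not a constant rational function. -/
def Nonconst (f : RatFunc ℂ) : Prop := ∀ c : ℂ, f ≠ RatFunc.C c

lemma Nonconst.ne_zero {f : RatFunc ℂ} (hf : Nonconst f) : f ≠ 0 := by
  intro h
  exact hf 0 (by rw [h, map_zero])

lemma aeval_eq_prod {f : RatFunc ℂ} (p : ℂ[X]) :
    Polynomial.aeval f p =
      RatFunc.C p.leadingCoeff * (p.roots.map (fun a => f - RatFunc.C a)).prod := by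
  conv_lhs => rw [(IsAlgClosed.splits p).eq_prod_roots]
  rw [map_mul, map_multiset_prod, Multiset.map_map]
  congr 1
  · simp [RatFunc.algebraMap_C]
  · congr 1
    apply Multiset.map_congr rfl
    intro a _
    simp

lemma aeval_ne_zero {f : RatFunc ℂ} (hf : Nonconst f) {p : ℂ[X]} (hp : p ≠ 0) :
    Polynomial.aeval f p ≠ 0 := by
  rw [aeval_eq_prod]
  apply mul_ne_zero
  · simpa using Polynomial.leadingCoeff_ne_zero.mpr hp
  · apply Multiset.prod_ne_zero
    intro h0
    obtain ⟨a, _, ha⟩ := Multiset.mem_map.mp h0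
    exact hf a (by linear_combination (norm := ring_nf) ha)

/-- The substitution `g ↦ g ∘ f` as a ring homomorphism. -/
def compHom (f : RatFunc ℂ) (hf : Nonconst f) : RatFunc ℂ →+* RatFunc ℂ :=
  RatFunc.liftRingHom (Polynomial.aeval f).toRingHom (fun p hp => by
    simp only [Submonoid.mem_comap, mem_nonZeroDivisors_iff_ne_zero] at hp ⊢
    exact aeval_ne_zero hf hp)

lemma comp_eq_compHom {f : RatFunc ℂ} (hf : Nonconst f) (g : RatFunc ℂ) :
    comp g f = compHom f hf g := by
  rw [compHom, RatFunc.liftRingHom_apply]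
  rfl

lemma compHom_algebraMap {f : RatFunc ℂ} (hf : Nonconst f) (p : ℂ[X]) :
    compHom f hf (A p) = Polynomial.aeval f p := by
  rw [← comp_eq_compHom hf, comp]
  rw [RatFunc.num_algebraMap, RatFunc.denom_algebraMap]
  simp

lemma compHom_C {f : RatFunc ℂ} (hf : Nonconst f) (c : ℂ) :
    compHom f hf (RatFunc.C c) = RatFunc.C c := by
  have : (RatFunc.C c : RatFunc ℂ) = A (Polynomial.C c) := (RatFunc.algebraMap_C c).symm
  rw [this, compHom_algebraMap hf, Polynomial.aeval_C]
  simp [RatFunc.algebraMap_C]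

lemma compHom_X {f : RatFunc ℂ} (hf : Nonconst f) :
    compHom f hf RatFunc.X = f := by
  have : (RatFunc.X : RatFunc ℂ) = A Polynomial.X := (RatFunc.algebraMap_X).symm
  rw [this, compHom_algebraMap hf, Polynomial.aeval_X]

lemma compHom_injective {f : RatFunc ℂ} (hf : Nonconst f) :
    Function.Injective (compHom f hf) :=
  (compHom f hf).injective

lemma compHom_ne_zero {f : RatFunc ℂ} (hf : Nonconst f) {g : RatFunc ℂ} (hg : g ≠ 0) :
    compHom f hf g ≠ 0 := by
  intro h
  exact hg (compHom_injective hf (by rw [h, map_zero]))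

lemma nonconst_compHom {f g : RatFunc ℂ} (hf : Nonconst f) (hg : Nonconst g) :
    Nonconst (compHom f hf g) := by
  intro c hc
  exact hg c (compHom_injective hf (by rw [hc, compHom_C]))

lemma compHom_aeval {f : RatFunc ℂ} (hf : Nonconst f) (h : RatFunc ℂ) (p : ℂ[X]) :
    compHom f hf (Polynomial.aeval h p) = Polynomial.aeval (compHom f hf h) p := by
  induction p using Polynomial.induction_on' with
  | add p q hp hq => rw [map_add, map_add, map_add, hp, hq]
  | monomial n a =>
    rw [Polynomial.aeval_monomial, Polynomial.aeval_monomial, map_mul, map_pow]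
    congr 1
    have : algebraMap ℂ (RatFunc ℂ) a = RatFunc.C a := rfl
    rw [this, compHom_C]

lemma compHom_comp {f₁ f₂ : RatFunc ℂ} (hf₁ : Nonconst f₁) (hf₂ : Nonconst f₂)
    (h12 : Nonconst (compHom f₂ hf₂ f₁)) (g : RatFunc ℂ) :
    compHom f₂ hf₂ (compHom f₁ hf₁ g) = compHom (compHom f₂ hf₂ f₁) h12 g := by
  conv_lhs => rw [← RatFunc.num_div_denom g]
  conv_rhs => rw [← RatFunc.num_div_denom g]
  simp only [map_div₀, compHom_algebraMap, compHom_aeval]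

/-! ### Derivative rules -/

lemma A_div_eq_iff {P Q R S : ℂ[X]} (hQ : Q ≠ 0) (hS : S ≠ 0) :
    A P / A Q = A R / A S ↔ P * S = R * Q := by
  rw [div_eq_div_iff (A_ne_zero hQ) (A_ne_zero hS), ← map_mul, ← map_mul,
    (RatFunc.algebraMap_injective ℂ).eq_iff]

lemma A_div_add {P Q R S : ℂ[X]} (hQ : Q ≠ 0) (hS : S ≠ 0) :
    A P / A Q + A R / A S = A (P * S + Q * R) / A (Q * S) := by
  rw [div_add_div _ _ (A_ne_zero hQ) (A_ne_zero hS), ← map_mul, ← map_mul, ← map_mul, ← map_add]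

lemma A_div_mul (P Q R S : ℂ[X]) :
    (A P / A Q) * (A R / A S) = A (P * R) / A (Q * S) := by
  rw [div_mul_div_comm, ← map_mul, ← map_mul]

lemma deriv_rep (g : RatFunc ℂ) :
    deriv g = A (Polynomial.derivative g.num * g.denom - g.num * Polynomial.derivative g.denom) /
      A (g.denom ^ 2) := rfl

lemma deriv_div {p q : ℂ[X]} (hq : q ≠ 0) :
    deriv (A p / A q) =
      A (Polynomial.derivative p * q - p * Polynomial.derivative q) / A (q ^ 2) := by
  set g : RatFunc ℂ := A p / A q with hg
  obtain ⟨s, hs, hp', hq'⟩ := rep_factor hq hg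
  rw [deriv_rep, A_div_eq_iff (pow_ne_zero 2 (RatFunc.denom_ne_zero g)) (pow_ne_zero 2 hq),
    hp', hq']
  simp only [Polynomial.derivative_mul]
  ring

lemma deriv_algebraMap (p : ℂ[X]) : deriv (A p) = A (Polynomial.derivative p) := by
  have h : (A p : RatFunc ℂ) = A p / A 1 := by simp
  rw [h, deriv_div one_ne_zero]
  simp

lemma deriv_C (c : ℂ) : deriv (RatFunc.C c) = 0 := by
  rw [← RatFunc.algebraMap_C c, deriv_algebraMap]
  simp

lemma deriv_one : deriv (1 : RatFunc ℂ) = 0 := by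
  rw [← map_one RatFunc.C, deriv_C]

lemma deriv_add (a b : RatFunc ℂ) : deriv (a + b) = deriv a + deriv b := by
  have ha := RatFunc.num_div_denom a
  have hb := RatFunc.num_div_denom b
  have hda := RatFunc.denom_ne_zero a
  have hdb := RatFunc.denom_ne_zero b
  conv_lhs => rw [← ha, ← hb]
  conv_rhs => rw [← ha, ← hb]
  rw [A_div_add hda hdb, deriv_div (mul_ne_zero hda hdb), deriv_div hda, deriv_div hdb,
    A_div_add (pow_ne_zero 2 hda) (pow_ne_zero 2 hdb),
    A_div_eq_iff (pow_ne_zero 2 (mul_ne_zero hda hdb))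
      (mul_ne_zero (pow_ne_zero 2 hda) (pow_ne_zero 2 hdb))]
  simp only [Polynomial.derivative_mul, Polynomial.derivative_add]
  ring

lemma deriv_mul (a b : RatFunc ℂ) : deriv (a * b) = deriv a * b + a * deriv b := by
  have ha := RatFunc.num_div_denom a
  have hb := RatFunc.num_div_denom b
  have hda := RatFunc.denom_ne_zero a
  have hdb := RatFunc.denom_ne_zero b
  conv_lhs => rw [← ha, ← hb]
  conv_rhs => rw [← ha, ← hb]
  rw [A_div_mul, deriv_div (mul_ne_zero hda hdb), deriv_div hda, deriv_div hdb,
    mul_comm (A _ / A _) (A (b.num) / A (b.denom)), A_div_mul, A_div_mul,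
    div_add_div _ _ (A_ne_zero (mul_ne_zero hdb (pow_ne_zero 2 hda)))
      (A_ne_zero (mul_ne_zero hda (pow_ne_zero 2 hdb)))]
  simp only [← map_mul, ← map_add]
  rw [A_div_eq_iff (pow_ne_zero 2 (mul_ne_zero hda hdb))
    (mul_ne_zero (mul_ne_zero hdb (pow_ne_zero 2 hda)) (mul_ne_zero hda (pow_ne_zero 2 hdb)))]
  simp only [Polynomial.derivative_mul]
  ring

lemma deriv_smulC (c : ℂ) (a : RatFunc ℂ) : deriv (RatFunc.C c * a) = RatFunc.C c * deriv a := by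
  rw [deriv_mul, deriv_C]
  ring

lemma deriv_neg (a : RatFunc ℂ) : deriv (-a) = -deriv a := by
  have : -a = RatFunc.C (-1) * a := by rw [map_neg, map_one]; ring
  rw [this, deriv_smulC, map_neg, map_one]
  ring

lemma deriv_sub (a b : RatFunc ℂ) : deriv (a - b) = deriv a - deriv b := by
  rw [sub_eq_add_neg, deriv_add, deriv_neg]
  ring

lemma deriv_pow (a : RatFunc ℂ) (n : ℕ) :
    deriv (a ^ n) = n * a ^ (n - 1) * deriv a := by
  induction n with
  | zero => simp [deriv_one]
  | succ n ih =>
    rw [pow_succ, deriv_mul, ih]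
    cases n with
    | zero => simp
    | succ m =>
      push_cast
      rw [pow_succ]
      ring

lemma deriv_inv {a : RatFunc ℂ} (ha : a ≠ 0) : deriv a⁻¹ = -deriv a / a ^ 2 := by
  have h1 : a * a⁻¹ = 1 := mul_inv_cancel₀ ha
  have h2 := congrArg deriv h1
  rw [deriv_mul, deriv_one] at h2
  rw [eq_div_iff (pow_ne_zero 2 ha)]
  linear_combination a * h2 - deriv a * h1

lemma deriv_div' {u v : RatFunc ℂ} (hv : v ≠ 0) :
    deriv (u / v) = (deriv u * v - u * deriv v) / v ^ 2 := by
  rw [div_eq_mul_inv, deriv_mul, deriv_inv hv]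
  field_simp
  ring

lemma deriv_aeval (h : RatFunc ℂ) (p : ℂ[X]) :
    deriv (Polynomial.aeval h p) = Polynomial.aeval h (Polynomial.derivative p) * deriv h := by
  induction p using Polynomial.induction_on' with
  | add p q hp hq =>
    simp only [map_add, deriv_add, hp, hq]
    ring
  | monomial n a =>
    rw [Polynomial.aeval_monomial, deriv_mul, deriv_pow, Polynomial.derivative_monomial,
      Polynomial.aeval_monomial]
    have : deriv ((algebraMap ℂ (RatFunc ℂ)) a) = 0 := deriv_C a
    rw [this]
    push_cast
    ring

lemma deriv_compHom {f : RatFunc ℂ} (hf : Nonconst f) (g : RatFunc ℂ) :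
    deriv (compHom f hf g) = compHom f hf (deriv g) * deriv f := by
  have hq := RatFunc.denom_ne_zero g
  have haq : Polynomial.aeval f g.denom ≠ 0 := aeval_ne_zero hf hq
  conv_lhs => rw [← RatFunc.num_div_denom g]
  rw [map_div₀, compHom_algebraMap, compHom_algebraMap, deriv_div' haq, deriv_aeval, deriv_aeval]
  conv_rhs => rw [deriv_rep g, map_div₀, compHom_algebraMap, compHom_algebraMap]
  rw [map_sub, map_mul, map_mul, map_pow]
  field_simp

/-! ### Order of the derivative -/

lemma rm_deriv_cross {p q : ℂ[X]} {y : ℂ} (hp : p ≠ 0) (hqy : q.eval y ≠ 0)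
    (ha : 1 ≤ p.rootMultiplicity y) :
    Polynomial.derivative p * q - p * Polynomial.derivative q ≠ 0 ∧
    (Polynomial.derivative p * q - p * Polynomial.derivative q).rootMultiplicity y
      = p.rootMultiplicity y - 1 := by
  set a := p.rootMultiplicity y with hadef
  set P := p /ₘ (X - Polynomial.C y) ^ a with hPdef
  have hfact : (X - Polynomial.C y) ^ a * P = p := p.pow_mul_divByMonic_rootMultiplicity_eq y
  have hPy : P.eval y ≠ 0 := Polynomial.eval_divByMonic_pow_rootMultiplicity_ne_zero y hp
  set B := Polynomial.C (a : ℂ) * P * q + (X - Polynomial.C y) *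
    (Polynomial.derivative P * q - P * Polynomial.derivative q) with hBdef
  have hBy : B.eval y ≠ 0 := by
    have : B.eval y = (a : ℂ) * P.eval y * q.eval y := by simp [hBdef]
    rw [this]
    refine mul_ne_zero (mul_ne_zero ?_ hPy) hqy
    exact Nat.cast_ne_zero.mpr (by omega)
  have hcross : Polynomial.derivative p * q - p * Polynomial.derivative q
      = (X - Polynomial.C y) ^ (a - 1) * B := by
    have hp' : Polynomial.derivative p
        = Polynomial.C (a : ℂ) * (X - Polynomial.C y) ^ (a - 1) * P
          + (X - Polynomial.C y) ^ a * Polynomial.derivative P := by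
      rw [← hfact, Polynomial.derivative_mul, Polynomial.derivative_pow,
        Polynomial.derivative_X_sub_C]
      ring
    rw [hp', hBdef]
    conv_lhs => rw [← hfact]
    have hpow : (X - Polynomial.C y) ^ a = (X - Polynomial.C y) ^ (a - 1) * (X - Polynomial.C y) := by
      rw [← pow_succ]
      congr 1
      omega
    rw [hpow]
    ring
  have hB0 : B ≠ 0 := fun h => hBy (by rw [h]; simp)
  have hne : (X - Polynomial.C y) ^ (a - 1) * B ≠ 0 :=
    mul_ne_zero (pow_ne_zero _ (Polynomial.X_sub_C_ne_zero y)) hB0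
  constructor
  · rw [hcross]; exact hne
  · rw [hcross, Polynomial.rootMultiplicity_mul hne, Polynomial.rootMultiplicity_X_sub_C_pow,
      Polynomial.rootMultiplicity_eq_zero hBy]
    omega

lemma ordC_deriv {h : RatFunc ℂ} (hh : h ≠ 0) {y : ℂ} (hne : ordC h y ≠ 0) :
    deriv h ≠ 0 ∧ ordC (deriv h) y = ordC h y - 1 := by
  have hnum := RatFunc.num_ne_zero hh
  have hden := RatFunc.denom_ne_zero h
  rcases lt_or_gt_of_ne hne with hlt | hgt
  · -- pole: denominator vanishes
    have hqy : h.num.eval y ≠ 0 := by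
      intro h0
      have := (num_root_iff hh y).mp h0
      omega
    have hrmden : 1 ≤ h.denom.rootMultiplicity y := by
      have h0 : h.denom.eval y = 0 := (denom_root_iff h y).mpr hlt
      exact (Polynomial.rootMultiplicity_pos hden).mpr h0
    have hrmnum : h.num.rootMultiplicity y = 0 :=
      Polynomial.rootMultiplicity_eq_zero hqy
    obtain ⟨hN0, hNrm⟩ := rm_deriv_cross hden hqy hrmden
    have hN0' : Polynomial.derivative h.num * h.denom - h.num * Polynomial.derivative h.denom ≠ 0 := by
      intro h0
      apply hN0
      linear_combination -h0
    have hrmN : (Polynomial.derivative h.num * h.denom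
        - h.num * Polynomial.derivative h.denom).rootMultiplicity y
        = h.denom.rootMultiplicity y - 1 := by
      have : Polynomial.derivative h.num * h.denom - h.num * Polynomial.derivative h.denom
          = (-1 : ℂ[X]) * (Polynomial.derivative h.denom * h.num
            - h.denom * Polynomial.derivative h.num) := by ring
      rw [this, Polynomial.rootMultiplicity_mul (by rw [← this]; exact hN0'), hNrm]
      have : ((-1 : ℂ[X]).rootMultiplicity y) = 0 :=
        Polynomial.rootMultiplicity_eq_zero (by simp)
      omega
    have hd2 : h.denom ^ 2 ≠ 0 := pow_ne_zero 2 hden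
    have hdne : deriv h ≠ 0 := by
      rw [deriv_rep]
      exact div_ne_zero (A_ne_zero hN0') (A_ne_zero hd2)
    refine ⟨hdne, ?_⟩
    rw [ordC_eq_of_rep hdne hd2 (deriv_rep h) y, hrmN]
    have hsq : (h.denom ^ 2).rootMultiplicity y = 2 * h.denom.rootMultiplicity y := by
      rw [pow_two, Polynomial.rootMultiplicity_mul (mul_ne_zero hden hden)]
      omega
    rw [hsq]
    unfold ordC
    rw [hrmnum]
    push_cast
    omega
  · -- zero: numerator vanishes
    have hdy : h.denom.eval y ≠ 0 := by
      intro h0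
      have := (denom_root_iff h y).mp h0
      omega
    have hrmden : h.denom.rootMultiplicity y = 0 := Polynomial.rootMultiplicity_eq_zero hdy
    have hrmnum : 1 ≤ h.num.rootMultiplicity y := by
      have h0 : h.num.eval y = 0 := by
        by_contra hc
        have := Polynomial.rootMultiplicity_eq_zero hc
        unfold ordC at hgt
        omega
      exact (Polynomial.rootMultiplicity_pos hnum).mpr h0
    obtain ⟨hN0, hNrm⟩ := rm_deriv_cross hnum hdy hrmnum
    have hd2 : h.denom ^ 2 ≠ 0 := pow_ne_zero 2 hden
    have hdne : deriv h ≠ 0 := by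
      rw [deriv_rep]
      exact div_ne_zero (A_ne_zero hN0) (A_ne_zero hd2)
    refine ⟨hdne, ?_⟩
    rw [ordC_eq_of_rep hdne hd2 (deriv_rep h) y, hNrm]
    have hsq : (h.denom ^ 2).rootMultiplicity y = 2 * h.denom.rootMultiplicity y := by
      rw [pow_two, Polynomial.rootMultiplicity_mul (mul_ne_zero hden hden)]
      omega
    rw [hsq]
    unfold ordC
    rw [hrmden]
    push_cast
    omega

/-! ### Order of compositions -/

lemma ordC_div {a b : RatFunc ℂ} (ha : a ≠ 0) (hb : b ≠ 0) (x : ℂ) :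
    ordC (a / b) x = ordC a x - ordC b x := by
  rw [div_eq_mul_inv, ordC_mul ha (inv_ne_zero hb), ordC_inv hb]
  ring

lemma ordC_multiset_prod (s : Multiset (RatFunc ℂ)) (hs : ∀ a ∈ s, a ≠ 0) (y : ℂ) :
    ordC s.prod y = (s.map (fun a => ordC a y)).sum := by
  induction s using Multiset.induction_on with
  | empty => simp [ordC_one]
  | cons a s ih =>
    have ha : a ≠ 0 := hs a (Multiset.mem_cons_self a s)
    have hs' : ∀ b ∈ s, b ≠ 0 := fun b hb => hs b (Multiset.mem_cons_of_mem hb)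
    have hprod : s.prod ≠ 0 := Multiset.prod_ne_zero (fun h0 => hs' 0 h0 rfl)
    rw [Multiset.prod_cons, ordC_mul ha hprod y, ih hs', Multiset.map_cons, Multiset.sum_cons]

lemma sum_map_ite (x : ℂ) (e : ℤ) (s : Multiset ℂ) :
    (s.map (fun r => if r = x then e else (0:ℤ))).sum = s.count x * e := by
  induction s using Multiset.induction_on with
  | empty => simp
  | cons a s ih =>
    rw [Multiset.map_cons, Multiset.sum_cons, ih, Multiset.count_cons]
    by_cases h : a = x
    · subst h; simp; push_cast; ring
    · have : ¬ x = a := fun hc => h hc.symm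
      simp [h, this]

lemma sub_C_ne_zero {f : RatFunc ℂ} (hf : Nonconst f) (a : ℂ) : f - RatFunc.C a ≠ 0 :=
  sub_ne_zero.mpr (hf a)

lemma ordC_aeval_finite {f : RatFunc ℂ} (hf : Nonconst f) {p : ℂ[X]} (hp : p ≠ 0)
    {y x : ℂ} (he : 1 ≤ ordC (f - RatFunc.C x) y) :
    ordC (Polynomial.aeval f p) y = (p.rootMultiplicity x : ℤ) * ordC (f - RatFunc.C x) y := by
  rw [aeval_eq_prod]
  have hlc : (RatFunc.C p.leadingCoeff : RatFunc ℂ) ≠ 0 := by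
    simpa using Polynomial.leadingCoeff_ne_zero.mpr hp
  have hall : ∀ a ∈ p.roots.map (fun a => f - RatFunc.C a), a ≠ 0 := by
    intro a ha
    obtain ⟨r, _, rfl⟩ := Multiset.mem_map.mp ha
    exact sub_C_ne_zero hf r
  have hprod : (p.roots.map (fun a => f - RatFunc.C a)).prod ≠ 0 :=
    Multiset.prod_ne_zero (fun h0 => hall 0 h0 rfl)
  rw [ordC_mul hlc hprod, ordC_C (Polynomial.leadingCoeff_ne_zero.mpr hp),
    ordC_multiset_prod _ hall, Multiset.map_map]
  have hfun : ∀ r : ℂ, ordC (f - RatFunc.C r) y = if r = x then ordC (f - RatFunc.C x) y else 0 := by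
    intro r
    by_cases hr : r = x
    · subst hr; simp
    · rw [if_neg hr]
      have hid : f - RatFunc.C r = RatFunc.C (x - r) + (f - RatFunc.C x) := by
        rw [map_sub]; ring
      have hxr : (x - r : ℂ) ≠ 0 := sub_ne_zero.mpr (fun hc => hr hc.symm)
      have hcne : (RatFunc.C (x - r) : RatFunc ℂ) ≠ 0 := C_ne_zero' hxr
      rw [hid, ordC_add_eq_left hcne (sub_C_ne_zero hf x) y
        (by rw [ordC_C hxr]; omega), ordC_C hxr]
  have : (p.roots.map fun r => ordC (f - RatFunc.C r) y)
      = p.roots.map fun r => if r = x then ordC (f - RatFunc.C x) y else 0 :=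
    Multiset.map_congr rfl (fun r _ => hfun r)
  rw [show ((fun a => ordC a y) ∘ fun a => f - RatFunc.C a) = fun r => ordC (f - RatFunc.C r) y
      from rfl, this, sum_map_ite, Polynomial.count_roots]
  ring

lemma ordC_aeval_pole {f : RatFunc ℂ} (hf : Nonconst f) {p : ℂ[X]} (hp : p ≠ 0)
    {y : ℂ} (hpole : ordC f y < 0) :
    ordC (Polynomial.aeval f p) y = (p.natDegree : ℤ) * ordC f y := by
  rw [aeval_eq_prod]
  have hlc : (RatFunc.C p.leadingCoeff : RatFunc ℂ) ≠ 0 := by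
    simpa using Polynomial.leadingCoeff_ne_zero.mpr hp
  have hall : ∀ a ∈ p.roots.map (fun a => f - RatFunc.C a), a ≠ 0 := by
    intro a ha
    obtain ⟨r, _, rfl⟩ := Multiset.mem_map.mp ha
    exact sub_C_ne_zero hf r
  have hprod : (p.roots.map (fun a => f - RatFunc.C a)).prod ≠ 0 :=
    Multiset.prod_ne_zero (fun h0 => hall 0 h0 rfl)
  rw [ordC_mul hlc hprod, ordC_C (Polynomial.leadingCoeff_ne_zero.mpr hp),
    ordC_multiset_prod _ hall, Multiset.map_map]
  have hfun : ∀ r : ℂ, ordC (f - RatFunc.C r) y = ordC f y := by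
    intro r
    by_cases hr : r = 0
    · subst hr; simp
    · have hid : f - RatFunc.C r = f + RatFunc.C (-r) := by rw [map_neg]; ring
      have hnr : (-r : ℂ) ≠ 0 := neg_ne_zero.mpr hr
      have hcne : (RatFunc.C (-r) : RatFunc ℂ) ≠ 0 := C_ne_zero' hnr
      rw [hid, ordC_add_eq_left hf.ne_zero hcne y (by rw [ordC_C hnr]; omega)]
  have : (p.roots.map fun r => ordC (f - RatFunc.C r) y) = p.roots.map fun _ => ordC f y :=
    Multiset.map_congr rfl (fun r _ => hfun r)
  rw [show ((fun a => ordC a y) ∘ fun a => f - RatFunc.C a) = fun r => ordC (f - RatFunc.C r) y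
      from rfl, this, Multiset.map_const', Multiset.sum_replicate]
  have hcard : p.roots.card = p.natDegree := by
    have h := (IsAlgClosed.splits p).natDegree_eq_card_roots
    omega
  rw [hcard, nsmul_eq_mul]
  ring

lemma comp_ne_zero {f g : RatFunc ℂ} (hf : Nonconst f) (hg : g ≠ 0) : comp g f ≠ 0 := by
  rw [comp_eq_compHom hf]
  exact compHom_ne_zero hf hg

lemma ordC_comp_finite {f g : RatFunc ℂ} (hf : Nonconst f) (hg : g ≠ 0)
    {y x : ℂ} (he : 1 ≤ ordC (f - RatFunc.C x) y) :
    ordC (comp g f) y = ordC g x * ordC (f - RatFunc.C x) y := by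
  rw [comp]
  rw [ordC_div (aeval_ne_zero hf (RatFunc.num_ne_zero hg))
      (aeval_ne_zero hf (RatFunc.denom_ne_zero g)),
    ordC_aeval_finite hf (RatFunc.num_ne_zero hg) he,
    ordC_aeval_finite hf (RatFunc.denom_ne_zero g) he]
  unfold ordC
  ring

lemma ordC_comp_pole {f g : RatFunc ℂ} (hf : Nonconst f) (hg : g ≠ 0)
    {y : ℂ} (hpole : ordC f y < 0) :
    ordC (comp g f) y = g.intDegree * ordC f y := by
  rw [comp]
  rw [ordC_div (aeval_ne_zero hf (RatFunc.num_ne_zero hg))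
      (aeval_ne_zero hf (RatFunc.denom_ne_zero g)),
    ordC_aeval_pole hf (RatFunc.num_ne_zero hg) hpole,
    ordC_aeval_pole hf (RatFunc.denom_ne_zero g) hpole,
    RatFunc.intDegree]
  ring

/-! ### The key local computation -/

lemma sub_C_rep (f : RatFunc ℂ) (x : ℂ) :
    f - RatFunc.C x = A (f.num - Polynomial.C x * f.denom) / A f.denom := by
  rw [map_sub, map_mul]
  rw [sub_div, mul_div_assoc]
  rw [RatFunc.num_div_denom]
  congr 1
  rw [div_self (A_ne_zero (RatFunc.denom_ne_zero f)), mul_one, RatFunc.algebraMap_C]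

lemma ordC_sub_C_pos {f : RatFunc ℂ} (hf : Nonconst f) {y : ℂ}
    (hden : f.denom.eval y ≠ 0) :
    1 ≤ ordC (f - RatFunc.C (f.num.eval y / f.denom.eval y)) y := by
  set x := f.num.eval y / f.denom.eval y with hx
  have hrep := sub_C_rep f x
  have hpy : (f.num - Polynomial.C x * f.denom).eval y = 0 := by
    simp only [Polynomial.eval_sub, Polynomial.eval_mul, Polynomial.eval_C]
    rw [hx]
    field_simp
    ring
  have := (ordC_pos_iff_rep (sub_C_ne_zero hf x) hden hrep).mpr hpy
  omega

lemma key_finite {f g : RatFunc ℂ} (hf : Nonconst f) (hg : g ≠ 0) (k : ℕ) {y : ℂ}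
    (hden : f.denom.eval y ≠ 0) :
    ordC (pullback k f g) y + k
      = locDegC f y * (ordC g (f.num.eval y / f.denom.eval y) + k) := by
  set x := f.num.eval y / f.denom.eval y with hx
  set h := f - RatFunc.C x with hh
  have hh0 : h ≠ 0 := sub_C_ne_zero hf x
  have he : 1 ≤ ordC h y := ordC_sub_C_pos hf hden
  have hderiv_eq : deriv f = deriv h := by
    rw [hh, deriv_sub, deriv_C]
    ring
  obtain ⟨hd0, hdord⟩ := ordC_deriv hh0 (by omega : ordC h y ≠ 0)
  have hcomp := ordC_comp_finite hf hg (x := x) (y := y) he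
  have hloc : (locDegC f y : ℤ) = ordC h y := by
    rw [locDegC, if_neg hden, ← hx, ← hh]
    exact Int.toNat_of_nonneg (by omega)
  rw [pullback, ordC_mul (comp_ne_zero hf hg) (pow_ne_zero k (by rw [hderiv_eq]; exact hd0)),
    ordC_pow (by rw [hderiv_eq]; exact hd0), hderiv_eq, hdord, hcomp, hloc]
  ring

lemma locDegC_pole_eq {f : RatFunc ℂ} (hf : f ≠ 0) {y : ℂ} (hden : f.denom.eval y = 0) :
    (locDegC f y : ℤ) = -ordC f y ∧ ordC f y < 0 := by
  have hnum : f.num.eval y ≠ 0 := by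
    intro h0
    exact coprime_not_both_root (RatFunc.isCoprime_num_denom f) y ⟨h0, hden⟩
  have hrmnum : f.num.rootMultiplicity y = 0 := Polynomial.rootMultiplicity_eq_zero hnum
  have hlt : ordC f y < 0 := (denom_root_iff f y).mp hden
  constructor
  · rw [locDegC, if_pos hden]
    unfold ordC
    rw [hrmnum]
    push_cast
    ring
  · exact hlt

lemma key_pole {f g : RatFunc ℂ} (hf : Nonconst f) (hg : g ≠ 0) (k : ℕ) {y : ℂ}
    (hden : f.denom.eval y = 0) :
    ordC (pullback k f g) y + k = locDegC f y * ((-g.intDegree - 2 * k) + k) := by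
  obtain ⟨hloc, hlt⟩ := locDegC_pole_eq hf.ne_zero hden
  obtain ⟨hd0, hdord⟩ := ordC_deriv hf.ne_zero (by omega : ordC f y ≠ 0)
  have hcomp := ordC_comp_pole hf hg (y := y) hlt
  rw [pullback, ordC_mul (comp_ne_zero hf hg) (pow_ne_zero k hd0),
    ordC_pow hd0, hdord, hcomp, hloc]
  ring

lemma mainLocal {f g : RatFunc ℂ} (hf : Nonconst f) (hg : g ≠ 0) (k : ℕ) (y : ℂ) :
    ordC (pullback k f g) y + k
      = locDegC f y * (ordDiff k g (evalP1 f (y : P1)) + k) := by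
  by_cases hden : f.denom.eval y = 0
  · have hev : evalP1 f (y : P1) = (∞ : P1) := by
      show (if f.denom.eval y = 0 then (∞ : P1) else _) = _
      rw [if_pos hden]
    rw [hev]
    exact key_pole hf hg k hden
  · have hev : evalP1 f (y : P1) = ((f.num.eval y / f.denom.eval y : ℂ) : P1) := by
      show (if f.denom.eval y = 0 then (∞ : P1) else _) = _
      rw [if_neg hden]
    rw [hev]
    exact key_finite hf hg k hden

/-! ### The coordinate at infinity -/

lemma nonconst_X : Nonconst (RatFunc.X : RatFunc ℂ) := by
  intro a ha
  have h1 : (RatFunc.X : RatFunc ℂ) = A Polynomial.X := (RatFunc.algebraMap_X).symm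
  have h2 : (RatFunc.C a : RatFunc ℂ) = A (Polynomial.C a) := (RatFunc.algebraMap_C a).symm
  rw [h1, h2] at ha
  have := (RatFunc.algebraMap_injective ℂ) ha
  exact Polynomial.X_ne_C a this

lemma X_ne_zero' : (RatFunc.X : RatFunc ℂ) ≠ 0 := nonconst_X.ne_zero

lemma Xinv_ne_zero : ((RatFunc.X)⁻¹ : RatFunc ℂ) ≠ 0 := inv_ne_zero X_ne_zero'

lemma nonconst_Xinv : Nonconst ((RatFunc.X)⁻¹ : RatFunc ℂ) := by
  intro a ha
  by_cases h0 : a = 0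
  · subst h0
    rw [map_zero] at ha
    exact Xinv_ne_zero ha
  · apply nonconst_X a⁻¹
    rw [← inv_inv (RatFunc.X : RatFunc ℂ), ha, map_inv₀]

lemma A_aeval_X (Q : ℂ[X]) : Polynomial.aeval (RatFunc.X : RatFunc ℂ) Q = A Q := by
  have h := Polynomial.aeval_algHom_apply
    (IsScalarTower.toAlgHom ℂ ℂ[X] (RatFunc ℂ)) Polynomial.X Q
  simpa [RatFunc.algebraMap_X, Polynomial.aeval_X_left_apply] using h

lemma rev_rep (P : ℂ[X]) :
    Polynomial.aeval ((RatFunc.X)⁻¹ : RatFunc ℂ) P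
      = A P.reverse * ((RatFunc.X)⁻¹ : RatFunc ℂ) ^ P.natDegree := by
  letI : Invertible ((RatFunc.X)⁻¹ : RatFunc ℂ) := invertibleOfNonzero Xinv_ne_zero
  have h := Polynomial.eval₂_reflect_mul_pow (algebraMap ℂ (RatFunc ℂ))
    ((RatFunc.X)⁻¹ : RatFunc ℂ) P.natDegree P le_rfl
  rw [invOf_eq_inv, inv_inv] at h
  have h1 : Polynomial.eval₂ (algebraMap ℂ (RatFunc ℂ)) (RatFunc.X : RatFunc ℂ)
      (Polynomial.reflect P.natDegree P) = A P.reverse := by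
    rw [← Polynomial.aeval_def, A_aeval_X, Polynomial.reverse]
  rw [h1] at h
  rw [Polynomial.aeval_def, ← h]

lemma ordC_X_at_zero : ordC (RatFunc.X : RatFunc ℂ) 0 = 1 := by
  have h1 : (RatFunc.X : RatFunc ℂ) = A Polynomial.X := (RatFunc.algebraMap_X).symm
  rw [h1, ordC_algebraMap (Polynomial.X_ne_zero)]
  have : (Polynomial.X : ℂ[X]) = Polynomial.X - Polynomial.C 0 := by simp
  rw [this, Polynomial.rootMultiplicity_X_sub_C_self]
  simp

lemma ordC_Xinv_at_zero : ordC ((RatFunc.X)⁻¹ : RatFunc ℂ) 0 = -1 := by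
  rw [ordC_inv X_ne_zero', ordC_X_at_zero]

lemma ordC_aeval_Xinv {P : ℂ[X]} (hP : P ≠ 0) :
    ordC (Polynomial.aeval ((RatFunc.X)⁻¹ : RatFunc ℂ) P) 0 = -(P.natDegree : ℤ) := by
  rw [rev_rep]
  have hrev : P.reverse ≠ 0 := by
    intro h
    exact hP (Polynomial.reverse_eq_zero.mp h)
  have hreval : P.reverse.eval 0 ≠ 0 := by
    rw [← Polynomial.coeff_zero_eq_eval_zero, Polynomial.coeff_zero_reverse]
    exact Polynomial.leadingCoeff_ne_zero.mpr hP
  have h1 : ordC (A P.reverse) 0 = 0 := by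
    rw [ordC_algebraMap hrev, Polynomial.rootMultiplicity_eq_zero hreval]
    simp
  rw [ordC_mul (A_ne_zero hrev) (pow_ne_zero _ Xinv_ne_zero) 0, h1,
    ordC_pow Xinv_ne_zero, ordC_Xinv_at_zero]
  ring

lemma ordC_comp_Xinv {g : RatFunc ℂ} (hg : g ≠ 0) :
    ordC (comp g (RatFunc.X)⁻¹) 0 = -g.intDegree := by
  rw [comp, ordC_div (aeval_ne_zero nonconst_Xinv (RatFunc.num_ne_zero hg))
      (aeval_ne_zero nonconst_Xinv (RatFunc.denom_ne_zero g)),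
    ordC_aeval_Xinv (RatFunc.num_ne_zero hg), ordC_aeval_Xinv (RatFunc.denom_ne_zero g),
    RatFunc.intDegree]
  ring

lemma deriv_X : deriv (RatFunc.X : RatFunc ℂ) = 1 := by
  rw [← RatFunc.algebraMap_X, deriv_algebraMap]
  simp

lemma deriv_Xinv : deriv ((RatFunc.X)⁻¹ : RatFunc ℂ) = -1 / (RatFunc.X : RatFunc ℂ) ^ 2 := by
  rw [deriv_inv X_ne_zero', deriv_X]

lemma deriv_Xinv_ne_zero : deriv ((RatFunc.X)⁻¹ : RatFunc ℂ) ≠ 0 := by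
  rw [deriv_Xinv]
  apply div_ne_zero
  · simp
  · exact pow_ne_zero 2 X_ne_zero'

lemma ordC_deriv_Xinv : ordC (deriv ((RatFunc.X)⁻¹ : RatFunc ℂ)) 0 = -2 := by
  rw [deriv_Xinv, ordC_div (by simp : (-1 : RatFunc ℂ) ≠ 0) (pow_ne_zero 2 X_ne_zero'),
    ordC_pow X_ne_zero', ordC_X_at_zero]
  have : ordC (-1 : RatFunc ℂ) 0 = 0 := by
    rw [ordC_neg one_ne_zero, ordC_one]
  rw [this]
  ring

lemma pullback_Xinv_ne_zero {h : RatFunc ℂ} (hh : h ≠ 0) (k : ℕ) :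
    pullback k (RatFunc.X)⁻¹ h ≠ 0 :=
  mul_ne_zero (comp_ne_zero nonconst_Xinv hh) (pow_ne_zero k deriv_Xinv_ne_zero)

lemma ordC_pullback_Xinv {h : RatFunc ℂ} (hh : h ≠ 0) (k : ℕ) :
    ordC (pullback k (RatFunc.X)⁻¹ h) 0 = -h.intDegree - 2 * k := by
  rw [pullback, ordC_mul (comp_ne_zero nonconst_Xinv hh) (pow_ne_zero k deriv_Xinv_ne_zero),
    ordC_pow deriv_Xinv_ne_zero, ordC_deriv_Xinv, ordC_comp_Xinv hh]
  ring

/-- Functoriality of pullbacks under (inner) composition. -/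
lemma pullback_comp (k : ℕ) {f c' : RatFunc ℂ} (hf : Nonconst f) (hc : Nonconst c')
    (g : RatFunc ℂ) :
    pullback k (comp f c') g = pullback k c' (pullback k f g) := by
  have hfc : Nonconst (compHom c' hc f) := nonconst_compHom hc hf
  have h1 : comp f c' = compHom c' hc f := comp_eq_compHom hc f
  simp only [pullback]
  rw [h1, comp_eq_compHom hfc g, ← compHom_comp hf hc hfc g, deriv_compHom hc f,
    comp_eq_compHom hf g, comp_eq_compHom hc, map_mul, map_pow]
  ring

lemma natDegree_eq_of_intDegree_zero {f : RatFunc ℂ} (h : f.intDegree = 0) :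
    f.num.natDegree = f.denom.natDegree := by
  rw [RatFunc.intDegree] at h
  omega

/-- `evalP1` at `∞` agrees with evaluating `f(1/w)` at `w = 0`. -/
lemma evalP1_infty {f : RatFunc ℂ} (hf : Nonconst f) :
    evalP1 f (∞ : P1) = evalP1 (comp f (RatFunc.X)⁻¹) ((0 : ℂ) : P1) := by
  set f₁ := comp f (RatFunc.X)⁻¹ with hf₁
  have hf₁0 : f₁ ≠ 0 := comp_ne_zero nonconst_Xinv hf.ne_zero
  have hord : ordC f₁ 0 = -f.intDegree := ordC_comp_Xinv hf.ne_zero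
  have hl : evalP1 f (∞ : P1)
      = (if 0 < f.intDegree then (∞ : P1)
         else if f.intDegree < 0 then ((0 : ℂ) : P1)
         else ((f.num.leadingCoeff / f.denom.leadingCoeff : ℂ) : P1)) := rfl
  have hr : evalP1 f₁ ((0 : ℂ) : P1)
      = (if f₁.denom.eval 0 = 0 then (∞ : P1)
         else ((f₁.num.eval 0 / f₁.denom.eval 0 : ℂ) : P1)) := rfl
  rw [hl, hr]
  rcases lt_trichotomy f.intDegree 0 with hneg | hzero | hpos
  · rw [if_neg (by omega), if_pos hneg]
    have hpos0 : 0 < ordC f₁ 0 := by omega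
    have hnum0 : f₁.num.eval 0 = 0 := (num_root_iff hf₁0 0).mpr hpos0
    have hden0 : f₁.denom.eval 0 ≠ 0 := fun hc => by
      have := (denom_root_iff f₁ 0).mp hc
      omega
    rw [if_neg hden0, hnum0]
    norm_num
  · rw [if_neg (by omega), if_neg (by omega)]
    -- representation f₁ = rev num / rev denom
    have hdeg := natDegree_eq_of_intDegree_zero hzero
    have hrep : f₁ = A f.num.reverse / A f.denom.reverse := by
      rw [hf₁, comp, rev_rep, rev_rep, hdeg, mul_div_mul_right _ _
        (pow_ne_zero _ Xinv_ne_zero)]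
    have hqy : f.denom.reverse.eval 0 ≠ 0 := by
      rw [← Polynomial.coeff_zero_eq_eval_zero, Polynomial.coeff_zero_reverse]
      exact Polynomial.leadingCoeff_ne_zero.mpr (RatFunc.denom_ne_zero f)
    have hden0 : f₁.denom.eval 0 ≠ 0 := (denom_eval_ne_zero_of_rep hqy hrep).1
    rw [if_neg hden0]
    have hval := value_of_rep hqy hrep
    rw [hval, ← Polynomial.coeff_zero_eq_eval_zero, ← Polynomial.coeff_zero_eq_eval_zero,
      Polynomial.coeff_zero_reverse, Polynomial.coeff_zero_reverse]
  · rw [if_pos hpos]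
    have hden0 : f₁.denom.eval 0 = 0 := (denom_root_iff f₁ 0).mpr (by omega)
    rw [if_pos hden0]

/-! ### The global order-transfer formula -/

lemma ordC_C_mul {lam : ℂ} (hlam : lam ≠ 0) {g : RatFunc ℂ} (hg : g ≠ 0) (y : ℂ) :
    ordC (RatFunc.C lam * g) y = ordC g y := by
  rw [ordC_mul (C_ne_zero' hlam) hg, ordC_C hlam]
  ring

lemma nonconst_comp_Xinv {f : RatFunc ℂ} (hf : Nonconst f) :
    Nonconst (comp f (RatFunc.X)⁻¹) := by
  rw [comp_eq_compHom nonconst_Xinv]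
  exact nonconst_compHom nonconst_Xinv hf

lemma full {f g : RatFunc ℂ} {k : ℕ} {lam : ℂ} (hf : Nonconst f) (hg : g ≠ 0)
    (hlam : lam ≠ 0) (heq : pullback k f g = RatFunc.C lam * g) (z : P1) :
    ordDiff k g z + k = locDeg f z * (ordDiff k g (evalP1 f z) + k) := by
  cases z with
  | some y =>
    have h1 := mainLocal hf hg k y
    rw [heq, ordC_C_mul hlam hg] at h1
    exact h1
  | none =>
    have hf₁ : Nonconst (comp f (RatFunc.X)⁻¹) := nonconst_comp_Xinv hf
    have h1 := mainLocal hf₁ hg k 0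
    have h2 : pullback k (comp f (RatFunc.X)⁻¹) g
        = RatFunc.C lam * pullback k (RatFunc.X)⁻¹ g := by
      rw [pullback_comp k hf nonconst_Xinv g, heq, pullback, pullback,
        comp_eq_compHom nonconst_Xinv, map_mul, compHom_C, comp_eq_compHom nonconst_Xinv]
      ring
    rw [h2, ordC_C_mul hlam (pullback_Xinv_ne_zero hg k), ordC_pullback_Xinv hg k,
      ← evalP1_infty hf] at h1
    exact h1

/-! ### Global lemmas -/

lemma locDegC_pos {f : RatFunc ℂ} (hf : Nonconst f) (y : ℂ) : 1 ≤ locDegC f y := by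
  by_cases hden : f.denom.eval y = 0
  · rw [locDegC, if_pos hden]
    exact (Polynomial.rootMultiplicity_pos (RatFunc.denom_ne_zero f)).mpr hden
  · rw [locDegC, if_neg hden]
    have := ordC_sub_C_pos hf hden
    omega

lemma locDeg_pos {f : RatFunc ℂ} (hf : Nonconst f) (z : P1) : 1 ≤ locDeg f z := by
  cases z with
  | some y => exact locDegC_pos hf y
  | none => exact locDegC_pos (nonconst_comp_Xinv hf) 0

lemma const_of_natDegrees_eq_zero {f : RatFunc ℂ} (hn : f.num.natDegree = 0)
    (hd : f.denom.natDegree = 0) : ∃ c : ℂ, f = RatFunc.C c := by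
  obtain ⟨a, ha⟩ : ∃ a, f.num = Polynomial.C a := ⟨_, Polynomial.eq_C_of_natDegree_eq_zero hn⟩
  obtain ⟨b, hb⟩ : ∃ b, f.denom = Polynomial.C b := ⟨_, Polynomial.eq_C_of_natDegree_eq_zero hd⟩
  refine ⟨a / b, ?_⟩
  rw [← RatFunc.num_div_denom f, ha, hb, RatFunc.algebraMap_C, RatFunc.algebraMap_C, map_div₀]

lemma evalP1_surjective {f : RatFunc ℂ} (hf : Nonconst f) :
    Function.Surjective (evalP1 f) := by
  intro x
  cases x with
  | none =>
    by_cases hd : f.denom.natDegree = 0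
    · -- denominator constant: pole at infinity
      have hn : f.num.natDegree ≠ 0 := by
        intro hn
        obtain ⟨c, hc⟩ := const_of_natDegrees_eq_zero hn hd
        exact hf c hc
      have hint : 0 < f.intDegree := by
        show (0:ℤ) < (f.num.natDegree : ℤ) - f.denom.natDegree
        omega
      refine ⟨(∞ : P1), ?_⟩
      show (if 0 < f.intDegree then (∞ : P1) else _) = _
      rw [if_pos hint]
      rfl
    · obtain ⟨y, hy⟩ := IsAlgClosed.exists_root f.denom (fun h0 =>
        hd (Polynomial.natDegree_eq_zero_iff_degree_le_zero.mpr (le_of_eq h0)))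
      refine ⟨((y : ℂ) : P1), ?_⟩
      show (if f.denom.eval y = 0 then (∞ : P1) else _) = _
      rw [if_pos (show f.denom.eval y = 0 from hy)]
      rfl
  | some c =>
    set N := f.num - Polynomial.C c * f.denom with hN
    have hnum_eq : f.num = Polynomial.C c * f.denom + N := by rw [hN]; ring
    have hN0 : N ≠ 0 := by
      intro h0
      apply hf c
      have hnum : f.num = Polynomial.C c * f.denom := by
        have := hnum_eq
        rw [h0, add_zero] at this
        exact this
      rw [← RatFunc.num_div_denom f, hnum, map_mul, mul_div_assoc,
        div_self (A_ne_zero (RatFunc.denom_ne_zero f)), mul_one, RatFunc.algebraMap_C]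
    by_cases hdeg : N.natDegree = 0
    · -- N is a nonzero constant
      by_cases hc : c = 0
      · -- f has negative degree; f(∞) = 0 = c
        subst hc
        have hnum0 : f.num.natDegree = 0 := by
          rw [hnum_eq]
          simpa using hdeg
        have hdd : f.denom.natDegree ≠ 0 := by
          intro h0
          obtain ⟨a, ha⟩ := const_of_natDegrees_eq_zero hnum0 h0
          exact hf a ha
        have h1 : ¬ 0 < f.intDegree := by
          show ¬ (0:ℤ) < (f.num.natDegree : ℤ) - f.denom.natDegree
          omega
        have h2 : f.intDegree < 0 := by
          show (f.num.natDegree : ℤ) - f.denom.natDegree < 0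
          omega
        refine ⟨(∞ : P1), ?_⟩
        show (if 0 < f.intDegree then (∞ : P1)
          else if f.intDegree < 0 then ((0 : ℂ) : P1) else _) = _
        rw [if_neg h1, if_pos h2]
        rfl
      · -- degrees are equal; f(∞) = c
        have hdd : f.denom.natDegree ≠ 0 := by
          intro h0
          have hnum0 : f.num.natDegree = 0 := by
            have h1 : f.num.natDegree ≤ max (Polynomial.C c * f.denom).natDegree N.natDegree := by
              rw [hnum_eq]; exact Polynomial.natDegree_add_le _ _
            have h2 : (Polynomial.C c * f.denom).natDegree ≤ f.denom.natDegree :=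
              le_trans (Polynomial.natDegree_mul_le) (by simp)
            omega
          obtain ⟨a, ha⟩ := const_of_natDegrees_eq_zero hnum0 h0
          exact hf a ha
        have hdegC : (Polynomial.C c * f.denom).degree = f.denom.degree := by
          rw [Polynomial.degree_mul, Polynomial.degree_C hc, zero_add]
        have hNlt : N.degree < (Polynomial.C c * f.denom).degree := by
          rw [hdegC]
          calc N.degree ≤ 0 := Polynomial.natDegree_eq_zero_iff_degree_le_zero.mp hdeg
          _ < f.denom.degree := by
            have := Polynomial.degree_eq_natDegree (RatFunc.denom_ne_zero f)
            rw [this]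
            exact_mod_cast Nat.pos_of_ne_zero hdd
        have hdegnum : f.num.degree = f.denom.degree := by
          rw [hnum_eq, Polynomial.degree_add_eq_left_of_degree_lt hNlt, hdegC]
        have hlc : f.num.leadingCoeff = c * f.denom.leadingCoeff := by
          rw [hnum_eq, Polynomial.leadingCoeff_add_of_degree_lt' hNlt,
            Polynomial.leadingCoeff_mul, Polynomial.leadingCoeff_C]
        have hint : f.intDegree = 0 := by
          show (f.num.natDegree : ℤ) - f.denom.natDegree = 0
          have : f.num.natDegree = f.denom.natDegree := by
            have h1 := Polynomial.degree_eq_natDegree (RatFunc.num_ne_zero hf.ne_zero)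
            have h2 := Polynomial.degree_eq_natDegree (RatFunc.denom_ne_zero f)
            rw [h1, h2] at hdegnum
            exact_mod_cast hdegnum
          omega
        refine ⟨(∞ : P1), ?_⟩
        show (if 0 < f.intDegree then (∞ : P1)
          else if f.intDegree < 0 then ((0 : ℂ) : P1)
          else ((f.num.leadingCoeff / f.denom.leadingCoeff : ℂ) : P1)) = _
        rw [if_neg (by omega), if_neg (by omega), hlc]
        congr 1
        rw [mul_div_assoc, div_self (Polynomial.leadingCoeff_ne_zero.mpr
          (RatFunc.denom_ne_zero f)), mul_one]
    · -- N has a root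
      obtain ⟨y, hy⟩ := IsAlgClosed.exists_root N (fun h0 =>
        hdeg (Polynomial.natDegree_eq_zero_iff_degree_le_zero.mpr (le_of_eq h0)))
      have hNy : N.eval y = 0 := hy
      have hdenY : f.denom.eval y ≠ 0 := by
        intro h0
        apply coprime_not_both_root (RatFunc.isCoprime_num_denom f) y
        refine ⟨?_, h0⟩
        have := congrArg (Polynomial.eval y) hnum_eq
        simp only [Polynomial.eval_add, Polynomial.eval_mul, Polynomial.eval_C, h0, hNy] at this
        simpa using this
      refine ⟨((y : ℂ) : P1), ?_⟩
      show (if f.denom.eval y = 0 then (∞ : P1)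
        else ((f.num.eval y / f.denom.eval y : ℂ) : P1)) = _
      rw [if_neg hdenY]
      congr 1
      have := congrArg (Polynomial.eval y) hnum_eq
      simp only [Polynomial.eval_add, Polynomial.eval_mul, Polynomial.eval_C, hNy,
        add_zero] at this
      rw [this]
      field_simp

lemma finite_support {g : RatFunc ℂ} (hg : g ≠ 0) (k : ℕ) :
    {z : P1 | 0 < ordDiff k g z}.Finite := by
  apply Set.Finite.subset (Set.Finite.insert (∞ : P1)
    (Set.Finite.image (fun y : ℂ => (y : P1)) (Polynomial.finite_setOf_isRoot
      (RatFunc.num_ne_zero hg))))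
  intro z hz
  cases z with
  | infty => exact Set.mem_insert _ _
  | coe y =>
    refine Set.mem_insert_of_mem _ ⟨y, ?_, rfl⟩
    have h1 : 0 < ordC g y := hz
    exact (num_root_iff hg y).mpr h1

lemma nonconst_of_degRat {f : RatFunc ℂ} {d : ℕ} (hdeg : degRat f = d) (hd : 1 ≤ d) :
    Nonconst f := by
  intro c hc
  rw [hc] at hdeg
  rw [degRat, RatFunc.num_C, RatFunc.denom_C, Polynomial.natDegree_C,
    Polynomial.natDegree_one] at hdeg
  omega

/-- The backward-orbit periodicity argument: if the order of `q` is positive along the whole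
backward orbit of `y`, then `y` is periodic. -/
lemma main_theorem (f g : RatFunc ℂ) (d k : ℕ) (lam : ℂ)
    (hdeg : degRat f = d) (hd : 1 < d) (hk : 1 ≤ k)
    (hg : g ≠ 0) (hlam : lam ≠ 0)
    (heq : pullback k f g = RatFunc.C lam * g) :
    ∀ x : P1, ∀ m : ℕ, ordDiff k g x = -(m : ℤ) → 0 < m → m < k →
      ∀ y : P1, evalP1 f y = x →
        locDeg f y * (k - m) ≤ k := by
  have hf : Nonconst f := nonconst_of_degRat hdeg (by omega)
  set t : P1 → ℤ := fun z => ordDiff k g z + k with ht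
  have hfull : ∀ z : P1, t z = locDeg f z * t (evalP1 f z) := fun z => full hf hg hlam heq z
  intro x m hordx hm hmk y hyx
  have htx : t x = ((k - m : ℕ) : ℤ) := by
    rw [ht]
    simp only []
    rw [hordx]
    push_cast
    omega
  have hty : t y = (locDeg f y : ℤ) * ((k - m : ℕ) : ℤ) := by
    rw [hfull y, hyx, htx]
  -- it suffices to show t y ≤ k
  have hsuff : t y ≤ k → locDeg f y * (k - m) ≤ k := by
    intro h
    have : ((locDeg f y * (k - m) : ℕ) : ℤ) ≤ (k : ℤ) := by
      push_cast
      rw [← hty]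
      exact_mod_cast h
    exact_mod_cast this
  apply hsuff
  by_contra hpos'
  push_neg at hpos'
  have hpos : (k : ℤ) < t y := hpos'
  have htypos : 0 < t y := by
    have : (0:ℤ) ≤ k := Int.ofNat_nonneg k
    omega
  -- the backward orbit of y
  set B : Set P1 := {z | ∃ n : ℕ, (evalP1 f)^[n] z = y} with hB
  have hmono : ∀ n : ℕ, ∀ z : P1, (evalP1 f)^[n] z = y → t y ≤ t z := by
    intro n
    induction n with
    | zero =>
      intro z hz
      simp only [Function.iterate_zero, id_eq] at hz
      rw [hz]
    | succ n ih =>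
      intro z hz
      rw [Function.iterate_succ_apply] at hz
      have h1 : t y ≤ t (evalP1 f z) := ih _ hz
      have h2 := hfull z
      have h3 := locDeg_pos hf z
      have h4 : (1 : ℤ) ≤ (locDeg f z : ℤ) := by exact_mod_cast h3
      nlinarith
  have hBy : y ∈ B := ⟨0, rfl⟩
  have hBfin : B.Finite := by
    apply Set.Finite.subset (finite_support hg k)
    rintro z ⟨n, hn⟩
    have h1 := hmono n z hn
    have h2 : t z = ordDiff k g z + k := rfl
    show 0 < ordDiff k g z
    omega
  -- every point of B has a preimage in B
  have hpre : ∀ z ∈ B, ∃ w, w ∈ B ∧ evalP1 f w = z := by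
    rintro z ⟨n, hn⟩
    obtain ⟨w, hw⟩ := evalP1_surjective hf z
    exact ⟨w, ⟨n + 1, by rw [Function.iterate_succ_apply, hw, hn]⟩, hw⟩
  haveI : Finite ↥B := hBfin.to_subtype
  set p : ↥B → ↥B := fun b => ⟨(hpre b.1 b.2).choose, (hpre b.1 b.2).choose_spec.1⟩ with hp
  have hpspec : ∀ b : ↥B, evalP1 f (p b).1 = b.1 := fun b => (hpre b.1 b.2).choose_spec.2
  have hpinj : Function.Injective p := by
    intro b₁ b₂ hb
    have h1 := hpspec b₁
    have h2 := hpspec b₂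
    rw [hb] at h1
    exact Subtype.ext (h1.symm.trans h2)
  have hpsurj : Function.Surjective p := Finite.surjective_of_injective hpinj
  obtain ⟨b, hb⟩ := hpsurj ⟨y, hBy⟩
  -- y is periodic
  have hfy : evalP1 f y = b.1 := by
    have := hpspec b
    rw [hb] at this
    exact this.symm ▸ rfl
  obtain ⟨n, hn⟩ := b.2
  have hper : (evalP1 f)^[n + 1] y = y := by
    rw [Function.iterate_succ_apply, hfy, hn]
  -- the product of local degrees along the cycle is 1
  have hclaim : ∀ j : ℕ, 1 ≤ j → ∃ c : ℕ, 1 ≤ c ∧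
      t y = ((locDeg f y * c : ℕ) : ℤ) * t ((evalP1 f)^[j] y) := by
    intro j
    induction j with
    | zero => omega
    | succ j ih =>
      intro _
      by_cases hj : 1 ≤ j
      · obtain ⟨c, hc1, hc2⟩ := ih hj
        refine ⟨c * locDeg f ((evalP1 f)^[j] y), ?_, ?_⟩
        · have := locDeg_pos hf ((evalP1 f)^[j] y)
          exact Nat.one_le_iff_ne_zero.mpr (by positivity)
        · rw [Function.iterate_succ_apply']
          rw [hc2, hfull ((evalP1 f)^[j] y)]
          push_cast
          ring
      · have hj0 : j = 0 := by omega
        subst hj0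
        refine ⟨1, le_refl 1, ?_⟩
        rw [Function.iterate_one, hfull y]
        push_cast
        ring
  obtain ⟨c, hc1, hc2⟩ := hclaim (n + 1) (by omega)
  rw [hper] at hc2
  -- t y = (e * c) * t y with t y > 0 forces e * c = 1
  have hec : locDeg f y * c = 1 := by
    have h1 : ((locDeg f y * c : ℕ) : ℤ) = 1 := by
      have h2 : (((locDeg f y * c : ℕ) : ℤ) - 1) * t y = 0 := by linarith [hc2]
      rcases mul_eq_zero.mp h2 with h3 | h3
      · omega
      · omega
    exact_mod_cast h1
  have he1 : locDeg f y = 1 := by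
    have h4 := Nat.le_of_dvd one_pos ⟨c, hec.symm⟩
    have h5 := locDeg_pos hf y
    omega
  rw [he1] at hty
  -- then t y = k - m ≤ k, contradiction
  have : t y ≤ k := by
    rw [hty]
    push_cast
    omega
  omega


/-- Ramification locus of `f`: the points of local degree at least 2. -/
def Ram (f : RatFunc ℂ) : Set P1 := {x | 2 ≤ locDeg f x}

/-- The postcritical set `⋃_{n ≥ 1} fⁿ(Ram_f)`. -/
def PostCrit (f : RatFunc ℂ) : Set P1 :=
  ⋃ (n : ℕ) (_ : 1 ≤ n), (evalP1 f)^[n] '' Ram f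

end ParallelTensor

/-- If `f*q = λ·q` and `x` is a pole of `q` of order `m < k`, then every preimage `y` of `x`
has local degree at most `k/(k-m)`, i.e. `deg_y(f)·(k - m) ≤ k`. -/
theorem stmt_7 (f g : RatFunc ℂ) (d k : ℕ) (lam : ℂ)
    (hdeg : ParallelTensor.degRat f = d) (hd : 1 < d) (hk : 1 ≤ k)
    (hg : g ≠ 0) (hlam : lam ≠ 0)
    (heq : ParallelTensor.pullback k f g = RatFunc.C lam * g) :
    ∀ x : P1, ∀ m : ℕ, ParallelTensor.ordDiff k g x = -(m : ℤ) → 0 < m → m < k →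
      ∀ y : P1, ParallelTensor.evalP1 f y = x →
        ParallelTensor.locDeg f y * (k - m) ≤ k :=
  ParallelTensor.main_theorem f g d k lam hdeg hd hk hg hlam heq

end
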